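/- There is no universal quantum cloning unitary: if H and M are complex inner product spaces with dim H ≥ 2, there do not exist a unitary operator U on H ⊗ H ⊗ M, a unit vector b ∈ H (the 'blank'), a unit vector m ∈ M (the machine state), and a family of vectors (m_x)_{x ∈ H} in M such that U(x ⊗ b ⊗ m) = x ⊗ x ⊗ m_x for every unit vector x ∈ H. (Equivalently: any such U would have to preserve inner products, but for two unit vectors x, x' with 0 < |⟨x, x'⟩| < 1 one gets ⟨x,x'⟩ = ⟨x,x'⟩²⟨m_x, m_{x'}⟩, which is impossible.) -/

import Mathlib

private lemma aux_pair {H : Type*} [NormedAddCommGroup H] [InnerProductSpace ℂ H]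
    [FiniteDimensional ℂ H] (hdim : 2 ≤ Module.finrank ℂ H) :
    ∃ e1 e2 : H, ‖e1‖ = 1 ∧ ‖e2‖ = 1 ∧ (inner ℂ e1 e2 : ℂ) = 0 ∧ (inner ℂ e2 e1 : ℂ) = 0 := by
  let B := stdOrthonormalBasis ℂ H
  have hB := B.orthonormal
  exact ⟨B ⟨0, by omega⟩, B ⟨1, by omega⟩, hB.1 _, hB.1 _, hB.2 (by simp), hB.2 (by simp)⟩

private lemma aux_norm_sq_of_inner {E : Type*} [NormedAddCommGroup E]
    [InnerProductSpace ℂ E] (v : E) (r : ℝ) (h : (inner ℂ v v : ℂ) = (r : ℂ)) :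
    ‖v‖ ^ 2 = r := by
  have h2 := inner_self_eq_norm_sq (𝕜 := ℂ) v
  rw [h] at h2
  simpa using h2.symm

theorem no_universal_cloning_unitary
    {H M T : Type*}
    [NormedAddCommGroup H] [InnerProductSpace ℂ H] [FiniteDimensional ℂ H]
    [NormedAddCommGroup M] [InnerProductSpace ℂ M]
    [NormedAddCommGroup T] [InnerProductSpace ℂ T]
    (hdim : 2 ≤ Module.finrank ℂ H)
    (tp : H → H → M → T)
    (htp : ∀ (x y : H) (z : M) (x' y' : H) (z' : M),
      (inner ℂ (tp x y z) (tp x' y' z') : ℂ) =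
        (inner ℂ x x' : ℂ) * (inner ℂ y y' : ℂ) * (inner ℂ z z' : ℂ)) :
    ¬ ∃ (U : T ≃ₗᵢ[ℂ] T) (b : H) (m : M) (mx : H → M),
        ‖b‖ = 1 ∧ ‖m‖ = 1 ∧
        ∀ x : H, ‖x‖ = 1 → U (tp x b m) = tp x x (mx x) := by
  rintro ⟨U, b, m, mx, hb, hm, hU⟩
  obtain ⟨e1, e2, he1, he2, h12, h21⟩ := aux_pair hdim
  set c : ℂ := (Real.sqrt 2 : ℂ)⁻¹ with hcdef
  have hs2 : (0:ℝ) < Real.sqrt 2 := Real.sqrt_pos.mpr (by norm_num)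
  have hcnorm : ‖c‖ = (Real.sqrt 2)⁻¹ := by
    rw [hcdef, norm_inv, Complex.norm_real, Real.norm_of_nonneg hs2.le]
  have hcne : c ≠ 0 := by
    rw [hcdef]
    simp [Complex.ofReal_ne_zero, hs2.ne']
  set x : H := e1 with hxdef
  set x' : H := c • (e1 + e2) with hx'def
  have hsumsq : (inner ℂ (e1 + e2) (e1 + e2) : ℂ) = 2 := by
    rw [inner_add_add_self, h12, h21]
    rw [inner_self_eq_norm_sq_to_K (𝕜 := ℂ), inner_self_eq_norm_sq_to_K (𝕜 := ℂ), he1, he2]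
    norm_num
  have hsumnorm : ‖e1 + e2‖ = Real.sqrt 2 := by
    have : ‖e1 + e2‖ ^ 2 = 2 := by
      have := aux_norm_sq_of_inner (e1 + e2) 2 (by rw [hsumsq]; norm_num)
      exact this
    nlinarith [norm_nonneg (e1 + e2), Real.sq_sqrt (by norm_num : (2:ℝ) ≥ 0),
      Real.sqrt_nonneg 2]
  have hx : ‖x‖ = 1 := he1
  have hx' : ‖x'‖ = 1 := by
    rw [hx'def, norm_smul, hcnorm, hsumnorm, inv_mul_cancel₀ hs2.ne']
  have hxx' : (inner ℂ x x' : ℂ) = c := by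
    rw [hx'def, inner_smul_right, inner_add_right, hxdef, h12,
      inner_self_eq_norm_sq_to_K (𝕜 := ℂ), he1]
    norm_num
  have hxx : (inner ℂ x x : ℂ) = 1 := by
    rw [inner_self_eq_norm_sq_to_K (𝕜 := ℂ), hx]; norm_num
  have hx'x' : (inner ℂ x' x' : ℂ) = 1 := by
    rw [inner_self_eq_norm_sq_to_K (𝕜 := ℂ), hx']; norm_num
  have hbb : (inner ℂ b b : ℂ) = 1 := by
    rw [inner_self_eq_norm_sq_to_K (𝕜 := ℂ), hb]; norm_num
  have hmm : (inner ℂ m m : ℂ) = 1 := by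
    rw [inner_self_eq_norm_sq_to_K (𝕜 := ℂ), hm]; norm_num
  set m1 : M := mx x with hm1def
  set m2 : M := mx x' with hm2def
  -- norm of m1
  have hm1n : (inner ℂ m1 m1 : ℂ) = 1 := by
    have := U.inner_map_map (tp x b m) (tp x b m)
    rw [hU x hx, htp, htp, hxx, hbb, hmm] at this
    simpa using this
  have hm2n : (inner ℂ m2 m2 : ℂ) = 1 := by
    have := U.inner_map_map (tp x' b m) (tp x' b m)
    rw [hU x' hx', htp, htp, hx'x', hbb, hmm] at this
    simpa using this
  have hm1norm : ‖m1‖ = 1 := by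
    have h2 := aux_norm_sq_of_inner m1 1 (by rw [hm1n]; norm_num)
    nlinarith [norm_nonneg m1]
  have hm2norm : ‖m2‖ = 1 := by
    have h2 := aux_norm_sq_of_inner m2 1 (by rw [hm2n]; norm_num)
    nlinarith [norm_nonneg m2]
  -- key equation
  have key : c = c * c * (inner ℂ m1 m2 : ℂ) := by
    have := U.inner_map_map (tp x b m) (tp x' b m)
    rw [hU x hx, hU x' hx', htp, htp, hxx', hbb, hmm] at this
    simpa using this.symm
  have hd : (inner ℂ m1 m2 : ℂ) = c⁻¹ := by
    have h1 : c * c * (inner ℂ m1 m2 : ℂ) = c * c * c⁻¹ := by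
      rw [← key, mul_assoc, mul_inv_cancel₀ hcne, mul_one]
    exact mul_left_cancel₀ (mul_ne_zero hcne hcne) h1
  have hle : ‖(inner ℂ m1 m2 : ℂ)‖ ≤ 1 := by
    calc ‖(inner ℂ m1 m2 : ℂ)‖ ≤ ‖m1‖ * ‖m2‖ := norm_inner_le_norm m1 m2
    _ = 1 := by rw [hm1norm, hm2norm, mul_one]
  rw [hd, norm_inv, hcnorm, inv_inv] at hle
  nlinarith [Real.sq_sqrt (by norm_num : (2:ℝ) ≥ 0), hs2]
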